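/- For the complete bipartite graph K_{m,1} (the star) with m ≥ 2, with variables x_1,…,x_m for the vertices in the part of size m and y_1 for the center, the second distance ideal is I_2(K_{m,1}, {x_1,…,x_m,y_1}) = ⟨x_1 − 2, …, x_m − 2, 2y_1 − 1⟩ in ℤ[x_1,…,x_m,y_1]. -/

import Mathlib

open Matrix MvPolynomial

variable {V : Type*}

/-- The distance matrix of a graph: the `(u,v)` entry is the graph distance `d_G(u,v)`. -/
noncomputable def distMatrix [Fintype V] (G : SimpleGraph V) : Matrix V V ℤ :=
  fun u v => (G.dist u v : ℤ)

/-- The transmission of a vertex: the sum of the distances to all vertices. -/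
noncomputable def transmission [Fintype V] (G : SimpleGraph V) (u : V) : ℤ :=
  ∑ v, (G.dist u v : ℤ)

/-- The distance Laplacian matrix `D^L(G) = diag(tr) - D(G)`. -/
noncomputable def distLaplacian [Fintype V] [DecidableEq V] (G : SimpleGraph V) : Matrix V V ℤ :=
  Matrix.diagonal (transmission G) - distMatrix G

/-- The signless distance Laplacian matrix `D^Q(G) = diag(tr) + D(G)`. -/
noncomputable def signlessDistLaplacian [Fintype V] [DecidableEq V] (G : SimpleGraph V) : Matrix V V ℤ :=
  Matrix.diagonal (transmission G) + distMatrix G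

/-- Two integer matrices are equivalent over `ℤ` if `M = U * N * W` with `U`, `W`
invertible over `ℤ` (unimodular). -/
def MatEquivZ [Fintype V] [DecidableEq V] (M N : Matrix V V ℤ) : Prop :=
  ∃ U W : Matrix V V ℤ, IsUnit U.det ∧ IsUnit W.det ∧ M = U * N * W

/-- `f` lists the diagonal entries of the Smith normal form of `M`:
the diagonal matrix `diagonal f` is equivalent to `M` over `ℤ`, consecutive entries
divide each other, and the entries are nonnegative (normalization over `ℤ`). -/
def IsSNF {N : ℕ} (M : Matrix (Fin N) (Fin N) ℤ) (f : Fin N → ℤ) : Prop :=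
  MatEquivZ M (Matrix.diagonal f) ∧ (∀ i j : Fin N, i ≤ j → f i ∣ f j) ∧ ∀ i, 0 ≤ f i

/-- The ideal generated by the determinants of all `k × k` submatrices of `M`. -/
def minorsIdeal {R : Type*} [CommRing R] [Fintype V] (M : Matrix V V R) (k : ℕ) : Ideal R :=
  Ideal.span (Set.range fun p : (Fin k → V) × (Fin k → V) => (M.submatrix p.1 p.2).det)

/-- The generalized distance matrix `D(G, X_G) = diag(X_G) + D(G)` over `ℤ[X_G]`. -/
noncomputable def genDistMatrix [Fintype V] [DecidableEq V] (G : SimpleGraph V) :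
    Matrix V V (MvPolynomial V ℤ) :=
  Matrix.diagonal (fun u => MvPolynomial.X u) +
    (distMatrix G).map (fun a => (a : MvPolynomial V ℤ))

/-- The `k`-th distance ideal `I_k(G, X_G)`: the ideal of `ℤ[X_G]` generated by the
determinants of all `k × k` submatrices of the generalized distance matrix. -/
noncomputable def distIdeal [Fintype V] [DecidableEq V] (G : SimpleGraph V) (k : ℕ) :
    Ideal (MvPolynomial V ℤ) :=
  minorsIdeal (genDistMatrix G) k

section
variable (m : ℕ)

local notation "G" => completeBipartiteGraph (Fin m) (Fin 1)

lemma star_adj (i : Fin m) (k : Fin 1) : (G).Adj (Sum.inl i) (Sum.inr k) := by simp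

lemma star_dist_lr (i : Fin m) (k : Fin 1) : (G).dist (Sum.inl i) (Sum.inr k) = 1 :=
  SimpleGraph.dist_eq_one_iff_adj.mpr (star_adj m i k)

lemma star_dist_rl (i : Fin m) (k : Fin 1) : (G).dist (Sum.inr k) (Sum.inl i) = 1 :=
  SimpleGraph.dist_eq_one_iff_adj.mpr ((star_adj m i k).symm)

lemma star_dist_ll (i j : Fin m) (h : i ≠ j) : (G).dist (Sum.inl i) (Sum.inl j) = 2 := by
  have w : (G).Walk (Sum.inl i) (Sum.inl j) :=
    SimpleGraph.Walk.cons (star_adj m i 0)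
      (SimpleGraph.Walk.cons ((star_adj m j 0).symm) SimpleGraph.Walk.nil)
  have hle : (G).dist (Sum.inl i) (Sum.inl j) ≤ 2 := by
    simpa [SimpleGraph.Walk.length_cons] using SimpleGraph.dist_le
      (SimpleGraph.Walk.cons (star_adj m i 0)
        (SimpleGraph.Walk.cons ((star_adj m j 0).symm) SimpleGraph.Walk.nil))
  have h0 : (G).dist (Sum.inl i) (Sum.inl j) ≠ 0 := by
    intro h'
    have hr : (G).Reachable (Sum.inl i) (Sum.inl j) := ⟨w⟩
    have := hr.dist_eq_zero_iff.mp h'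
    simp at this
    exact h this
  have h1 : (G).dist (Sum.inl i) (Sum.inl j) ≠ 1 := by
    intro h'
    have := SimpleGraph.dist_eq_one_iff_adj.mp h'
    simp at this
  omega


lemma star_entry_ll (i j : Fin m) :
    genDistMatrix (G) (Sum.inl i) (Sum.inl j) =
      if i = j then MvPolynomial.X (Sum.inl i) else 2 := by
  by_cases h : i = j
  · subst h
    simp [genDistMatrix, Matrix.diagonal, distMatrix, SimpleGraph.dist_self]
  · simp [genDistMatrix, Matrix.diagonal, distMatrix, star_dist_ll m i j h, h,
      Sum.inl.injEq]

lemma star_entry_lr (i : Fin m) (k : Fin 1) :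
    genDistMatrix (G) (Sum.inl i) (Sum.inr k) = 1 := by
  simp [genDistMatrix, Matrix.diagonal, distMatrix, star_dist_lr m i k]

lemma star_entry_rl (i : Fin m) (k : Fin 1) :
    genDistMatrix (G) (Sum.inr k) (Sum.inl i) = 1 := by
  simp [genDistMatrix, Matrix.diagonal, distMatrix, star_dist_rl m i k]

lemma star_entry_rr (k l : Fin 1) :
    genDistMatrix (G) (Sum.inr k) (Sum.inr l) = MvPolynomial.X (Sum.inr k) := by
  have : k = l := Subsingleton.elim k l
  subst this
  simp [genDistMatrix, Matrix.diagonal, distMatrix, SimpleGraph.dist_self]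

end

/-- For the star `K_{m,1}` with `m ≥ 2`, with variables `x_i` for the
vertices of the part of size `m` and `y₁` for the center, the second distance ideal is
`⟨x₁ - 2, …, x_m - 2, 2y₁ - 1⟩`. -/
theorem distIdeal_two_star (m : ℕ) (hm : 2 ≤ m) :
    distIdeal (completeBipartiteGraph (Fin m) (Fin 1)) 2 =
      Ideal.span
        ((Set.range fun i : Fin m =>
            (MvPolynomial.X (Sum.inl i) : MvPolynomial (Fin m ⊕ Fin 1) ℤ) - 2) ∪
          {2 * MvPolynomial.X (Sum.inr (0 : Fin 1)) - 1}) := by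
  classical
  have hm0 : 0 < m := by omega
  have hm1 : 1 < m := by omega
  set J : Ideal (MvPolynomial (Fin m ⊕ Fin 1) ℤ) :=
    Ideal.span
      ((Set.range fun i : Fin m =>
          (MvPolynomial.X (Sum.inl i) : MvPolynomial (Fin m ⊕ Fin 1) ℤ) - 2) ∪
        {2 * MvPolynomial.X (Sum.inr (0 : Fin 1)) - 1}) with hJ
  have hxmem : ∀ i : Fin m,
      (MvPolynomial.X (Sum.inl i) : MvPolynomial (Fin m ⊕ Fin 1) ℤ) - 2 ∈ J := fun i =>
    Ideal.subset_span (Or.inl ⟨i, rfl⟩)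
  have hymem : (2 * MvPolynomial.X (Sum.inr (0 : Fin 1)) - 1 :
      MvPolynomial (Fin m ⊕ Fin 1) ℤ) ∈ J :=
    Ideal.subset_span (Or.inr rfl)
  apply le_antisymm
  · rw [distIdeal, minorsIdeal, Ideal.span_le]
    rintro x ⟨⟨p, q⟩, rfl⟩
    simp only [SetLike.mem_coe]
    rw [← Ideal.Quotient.eq_zero_iff_mem]
    set φ := Ideal.Quotient.mk J with hφ
    have hx : ∀ i : Fin m, φ (MvPolynomial.X (Sum.inl i)) = 2 := by
      intro i
      have h2 : φ (MvPolynomial.X (Sum.inl i)) - 2 = 0 := by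
        have h3 := Ideal.Quotient.eq_zero_iff_mem.mpr (hxmem i)
        rw [map_sub, map_ofNat] at h3
        exact h3
      linear_combination h2
    have hy : 2 * φ (MvPolynomial.X (Sum.inr (0 : Fin 1))) = 1 := by
      have h2 : 2 * φ (MvPolynomial.X (Sum.inr (0 : Fin 1))) - 1 = 0 := by
        have h3 := Ideal.Quotient.eq_zero_iff_mem.mpr hymem
        rw [map_sub, _root_.map_mul, map_ofNat, _root_.map_one] at h3
        exact h3
      linear_combination h2
    set r : (Fin m ⊕ Fin 1) → MvPolynomial (Fin m ⊕ Fin 1) ℤ ⧸ J :=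
      Sum.elim (fun _ => 2) (fun _ => 1) with hr
    set c : (Fin m ⊕ Fin 1) → MvPolynomial (Fin m ⊕ Fin 1) ℤ ⧸ J :=
      Sum.elim (fun _ => 1) (fun _ => φ (MvPolynomial.X (Sum.inr (0 : Fin 1)))) with hc
    have key : ∀ u v : Fin m ⊕ Fin 1,
        φ (genDistMatrix (completeBipartiteGraph (Fin m) (Fin 1)) u v) = r u * c v := by
      rintro (i | k) (j | l)
      · rw [star_entry_ll]
        by_cases h : i = j
        · simp [h, hr, hc, hx]
        · simp [h, hr, hc, map_ofNat]
      · have hl : (l : Fin 1) = 0 := Subsingleton.elim _ _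
        rw [star_entry_lr]
        simp only [hr, hc, Sum.elim_inl, Sum.elim_inr, _root_.map_one]
        linear_combination -hy
      · rw [star_entry_rl]
        simp [hr, hc]
      · have hk : (k : Fin 1) = 0 := Subsingleton.elim _ _
        have hl : (l : Fin 1) = 0 := Subsingleton.elim _ _
        rw [star_entry_rr]
        simp [hr, hc, hk, hl]
    rw [Matrix.det_fin_two]
    simp only [Matrix.submatrix_apply, map_sub, _root_.map_mul]
    rw [key, key, key, key]
    ring
  · rw [hJ, Ideal.span_le]
    rintro x (⟨i, rfl⟩ | rfl)
    · simp only [SetLike.mem_coe]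
      obtain ⟨j, hj⟩ : ∃ j : Fin m, j ≠ i := by
        by_cases h : i = ⟨0, hm0⟩
        · exact ⟨⟨1, hm1⟩, by simp [h, Fin.ext_iff]⟩
        · exact ⟨⟨0, hm0⟩, fun h' => h h'.symm⟩
      have hmem : ((genDistMatrix (completeBipartiteGraph (Fin m) (Fin 1))).submatrix
          ![Sum.inl j, Sum.inl i] ![Sum.inl i, Sum.inr (0 : Fin 1)]).det ∈
          distIdeal (completeBipartiteGraph (Fin m) (Fin 1)) 2 :=
        Ideal.subset_span ⟨(![Sum.inl j, Sum.inl i], ![Sum.inl i, Sum.inr 0]), rfl⟩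
      have hdet : ((genDistMatrix (completeBipartiteGraph (Fin m) (Fin 1))).submatrix
          ![Sum.inl j, Sum.inl i] ![Sum.inl i, Sum.inr (0 : Fin 1)]).det =
          2 - MvPolynomial.X (Sum.inl i) := by
        rw [Matrix.det_fin_two]
        simp only [Matrix.submatrix_apply, Matrix.cons_val_zero, Matrix.cons_val_one,
          Matrix.head_cons]
        rw [star_entry_ll, star_entry_lr, star_entry_lr, star_entry_ll]
        rw [if_neg hj, if_pos rfl]
        ring
      have hneg := neg_mem hmem
      rw [hdet] at hneg
      convert hneg using 1
      ring
    · simp only [SetLike.mem_coe]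
      have h01 : (⟨0, hm0⟩ : Fin m) ≠ ⟨1, hm1⟩ := by simp [Fin.ext_iff]
      have hmem : ((genDistMatrix (completeBipartiteGraph (Fin m) (Fin 1))).submatrix
          ![Sum.inl (⟨0, hm0⟩ : Fin m), Sum.inr (0 : Fin 1)]
          ![Sum.inl (⟨1, hm1⟩ : Fin m), Sum.inr (0 : Fin 1)]).det ∈
          distIdeal (completeBipartiteGraph (Fin m) (Fin 1)) 2 :=
        Ideal.subset_span ⟨(![Sum.inl ⟨0, hm0⟩, Sum.inr 0], ![Sum.inl ⟨1, hm1⟩, Sum.inr 0]), rfl⟩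
      have hdet : ((genDistMatrix (completeBipartiteGraph (Fin m) (Fin 1))).submatrix
          ![Sum.inl (⟨0, hm0⟩ : Fin m), Sum.inr (0 : Fin 1)]
          ![Sum.inl (⟨1, hm1⟩ : Fin m), Sum.inr (0 : Fin 1)]).det =
          2 * MvPolynomial.X (Sum.inr (0 : Fin 1)) - 1 := by
        rw [Matrix.det_fin_two]
        simp only [Matrix.submatrix_apply, Matrix.cons_val_zero, Matrix.cons_val_one,
          Matrix.head_cons]
        rw [star_entry_ll, star_entry_rr, star_entry_lr, star_entry_rl]
        rw [if_neg h01]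
        ring
      rw [← hdet]
      exact hmem
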